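/- Let A be a unital commutative Banach algebra over ℂ and let M be a closed ideal of A of codimension one. If A is M-weakly amenable, then A is weakly amenable: every derivation from A into A* is inner (equivalently, since A is commutative, zero). -/

import Mathlib

set_option maxHeartbeats 1000000 in
/-- Auxiliary Hahn–Banach separation: a continuous functional vanishing on a closed
proper subspace and nonzero at a given point outside it. -/
lemma aux_exists_functional_vanishing_on_closed_submodule
    {E : Type*} [NormedAddCommGroup E] [NormedSpace ℂ E]
    (N : Submodule ℂ E) (hNcl : IsClosed (N : Set E)) {x : E} (hx : x ∉ N) :
    ∃ lam : E →L[ℂ] ℂ, (∀ y ∈ N, lam y = 0) ∧ lam x ≠ 0 := by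
  haveI : IsClosed (N : Set E) := hNcl
  have hqx : (Submodule.Quotient.mk x : E ⧸ N) ≠ 0 :=
    fun h => hx ((Submodule.Quotient.mk_eq_zero N).1 h)
  obtain ⟨g, hg⟩ := SeparatingDual.exists_ne_zero (R := ℂ) hqx
  set π : E →L[ℂ] (E ⧸ N) :=
    N.mkQ.mkContinuous 1 (fun m => by
      simpa using Submodule.Quotient.norm_mk_le N m) with hπdef
  refine ⟨g.comp π, fun y hy => ?_, hg⟩
  have : π y = 0 := by
    show N.mkQ y = 0
    simpa [Submodule.Quotient.mk_eq_zero] using hy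
  simp [ContinuousLinearMap.comp_apply, this]

set_option maxHeartbeats 1000000

/-- Let `A` be a unital commutative Banach algebra and `M` a closed
ideal of codimension one. If `A` is `M`-weakly amenable, then `A` is weakly amenable. -/
theorem weaklyAmenable_of_mWeaklyAmenable_unital_commutative
    {A : Type*} [NormedCommRing A] [NormedAlgebra ℂ A] [CompleteSpace A]
    -- `M` is a closed ideal of codimension one
    (M : Submodule ℂ A) (hMclosed : IsClosed (M : Set A))
    (hM : ∀ a : A, ∀ x ∈ M, a * x ∈ M ∧ x * a ∈ M)
    (hcodim : Module.finrank ℂ (A ⧸ M) = 1)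
    -- `A` is `M`-weakly amenable
    (hMWA : ∀ D : A →L[ℂ] (↥M →L[ℂ] ℂ),
      (∀ a b : A, ∀ m : ↥M,
        D (a * b) m = D b ⟨(m : A) * a, (hM a m m.2).2⟩ +
          D a ⟨b * (m : A), (hM b m m.2).1⟩) →
      ∃ f : ↥M →L[ℂ] ℂ, ∀ a : A, ∀ m : ↥M,
        D a m = f ⟨(m : A) * a - a * (m : A),
          M.sub_mem (hM a m m.2).2 (hM a m m.2).1⟩) :
    -- then `A` is weakly amenable
    ∀ D : A →L[ℂ] (A →L[ℂ] ℂ),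
      (∀ a b c : A, D (a * b) c = D b (c * a) + D a (b * c)) →
      ∃ f : A →L[ℂ] ℂ, ∀ a b : A, D a b = f (b * a - a * b) := by
  intro D hD
  -- M is proper: 1 ∉ M
  have hone : (1 : A) ∉ M := by
    intro h1
    have hMtop : M = ⊤ := by
      rw [Submodule.eq_top_iff']
      intro a
      simpa using (hM a 1 h1).1
    have : Subsingleton (A ⧸ M) := Submodule.Quotient.subsingleton_iff.2 hMtop
    rw [Module.finrank_zero_of_subsingleton] at hcodim
    exact one_ne_zero hcodim.symm
  -- existence of a "character" decomposition
  have hchi : ∀ a : A, ∃ c : ℂ, a - c • 1 ∈ M := by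
    have hπ1 : (Submodule.Quotient.mk (1 : A) : A ⧸ M) ≠ 0 := by
      simpa [Submodule.Quotient.mk_eq_zero] using hone
    have hspan : Submodule.span ℂ {(Submodule.Quotient.mk (1 : A) : A ⧸ M)} = ⊤ := by
      have hfd : FiniteDimensional ℂ (A ⧸ M) :=
        Module.finite_of_finrank_eq_succ hcodim
      apply Submodule.eq_top_of_finrank_eq
      rw [finrank_span_singleton hπ1, hcodim]
    intro a
    have : (Submodule.Quotient.mk a : A ⧸ M) ∈
        Submodule.span ℂ {(Submodule.Quotient.mk (1 : A) : A ⧸ M)} := by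
      rw [hspan]; trivial
    rcases Submodule.mem_span_singleton.1 this with ⟨c, hc⟩
    refine ⟨c, ?_⟩
    rw [← Submodule.Quotient.mk_eq_zero, Submodule.Quotient.mk_sub]
    rw [← hc]
    simp [Submodule.Quotient.mk_smul]
  choose χ hχ using hchi
  -- D 1 = 0
  have hD1 : ∀ c : A, D 1 c = 0 := by
    intro c
    have := hD 1 1 c
    simp only [mul_one, one_mul] at this
    exact left_eq_add.mp this
  -- Step 1: D a vanishes on M
  have hvanish : ∀ a : A, ∀ m : ↥M, D a (m : A) = 0 := by
    set D' : A →L[ℂ] (↥M →L[ℂ] ℂ) :=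
      (((ContinuousLinearMap.compL ℂ ↥M A ℂ).flip M.subtypeL).comp D) with hD'def
    have hD'app : ∀ a : A, ∀ m : ↥M, D' a m = D a (m : A) := fun a m => rfl
    obtain ⟨f, hf⟩ := hMWA D' (by
      intro a b m
      rw [hD'app, hD'app, hD'app]
      exact hD a b (m : A))
    intro a m
    have h0 : (⟨(m : A) * a - a * (m : A),
        M.sub_mem (hM a m m.2).2 (hM a m m.2).1⟩ : ↥M) = 0 := by
      ext
      simp [mul_comm]
    have := hf a m
    rw [hD'app, h0, map_zero] at this
    exact this
  -- decomposition lemma: D b a = χ a * D b 1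
  have hdec : ∀ a b : A, D b a = χ a * D b 1 := by
    intro a b
    have ha : a = (a - χ a • (1 : A)) + χ a • (1 : A) := by abel
    calc D b a = D b ((a - χ a • (1 : A)) + χ a • (1 : A)) := by rw [← ha]
      _ = D b (a - χ a • (1 : A)) + χ a • D b 1 := by rw [map_add, map_smul]
      _ = 0 + χ a * D b 1 := by
          rw [hvanish b ⟨a - χ a • (1 : A), hχ a⟩, smul_eq_mul]
      _ = χ a * D b 1 := by ring
  -- point derivation property of φ a := D a 1
  have hpd : ∀ a b : A, D (a * b) 1 = χ a * D b 1 + χ b * D a 1 := by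
    intro a b
    have := hD a b 1
    rw [one_mul, mul_one] at this
    rw [this, hdec a b, hdec b a]
  -- the square-vanishing set
  set Sset : Set ↥M := {x : ↥M | ∃ p q : ↥M, (x : A) = (p : A) * (q : A)} with hSset
  -- Key claim: D m 1 = 0 for m ∈ M
  have hφM : ∀ m : ↥M, D (m : A) 1 = 0 := by
    set ψ : ↥M →L[ℂ] ℂ := (D.flip 1).comp M.subtypeL with hψdef
    have hψapp : ∀ m : ↥M, ψ m = D (m : A) 1 := fun m => rfl
    by_cases hN : (Submodule.span ℂ Sset).topologicalClosure = ⊤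
    · -- M² is dense in M
      have hker : Submodule.span ℂ Sset ≤ LinearMap.ker (ψ : ↥M →ₗ[ℂ] ℂ) := by
        rw [Submodule.span_le]
        rintro x ⟨p, q, hx⟩
        have hx1 : D (x : A) 1 = 0 := by
          rw [hx]
          have h1 := hD (p : A) (q : A) 1
          rw [one_mul, mul_one] at h1
          rw [h1, hvanish (q : A) p, hvanish (p : A) q, add_zero]
        simpa [SetLike.mem_coe, LinearMap.mem_ker, hψapp] using hx1
      have hker' : (Submodule.span ℂ Sset).topologicalClosure ≤ LinearMap.ker (ψ : ↥M →ₗ[ℂ] ℂ) :=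
        Submodule.topologicalClosure_minimal _ hker (ContinuousLinearMap.isClosed_ker ψ)
      intro m
      have : m ∈ LinearMap.ker (ψ : ↥M →ₗ[ℂ] ℂ) := hker' (hN ▸ Submodule.mem_top)
      simpa [hψapp] using this
    · -- M² is not dense in M: build λ and the rank-one derivation
      set N : Submodule ℂ ↥M := (Submodule.span ℂ Sset).topologicalClosure with hNdef
      haveI : CompleteSpace ↥M := hMclosed.completeSpace_coe
      haveI hNcl : IsClosed (N : Set ↥M) := Submodule.isClosed_topologicalClosure _
      obtain ⟨x, hx⟩ : ∃ x : ↥M, x ∉ N := by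
        by_contra h
        push_neg at h
        exact hN (Submodule.eq_top_iff'.2 h)
      obtain ⟨lam, hlamN', hlamx⟩ :=
        aux_exists_functional_vanishing_on_closed_submodule N hNcl hx
      have hlamN : ∀ y : ↥M, y ∈ N → lam y = 0 := fun y hy => hlamN' y hy
      -- key multiplicativity of lam
      have hlam_mul : ∀ (a : A) (m : ↥M) (h : (m : A) * a ∈ M),
          lam ⟨(m : A) * a, h⟩ = χ a * lam m := by
        intro a m h
        have hmem : ((m : A) * (a - χ a • (1 : A)) ∈ M) := (hM _ _ (hχ a)).1
        have hsplit : (⟨(m : A) * a, h⟩ : ↥M) =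
            ⟨(m : A) * (a - χ a • (1 : A)), hmem⟩ + χ a • m := by
          ext
          simp [mul_sub, Algebra.mul_smul_comm]
        have hNmem : (⟨(m : A) * (a - χ a • (1 : A)), hmem⟩ : ↥M) ∈ N :=
          Submodule.le_topologicalClosure _
            (Submodule.subset_span ⟨m, ⟨a - χ a • (1 : A), hχ a⟩, rfl⟩)
        rw [hsplit, map_add, map_smul, hlamN _ hNmem, zero_add, smul_eq_mul]
      -- the rank-one derivation into M*
      set D3 : A →L[ℂ] (↥M →L[ℂ] ℂ) := (D.flip 1).smulRight lam with hD3def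
      have hD3app : ∀ (a : A) (m : ↥M), D3 a m = D a 1 * lam m := fun a m => rfl
      obtain ⟨f, hf⟩ := hMWA D3 (by
        intro a b m
        rw [hD3app, hD3app, hD3app, hpd a b]
        rw [hlam_mul a m (hM a m m.2).2]
        have hbm : (⟨b * (m : A), (hM b m m.2).1⟩ : ↥M)
            = ⟨(m : A) * b, (hM b m m.2).2⟩ := by
          ext; exact mul_comm b (m : A)
        rw [hbm, hlam_mul b m (hM b m m.2).2]
        ring)
      have hzero : ∀ (a : A) (m : ↥M), D a 1 * lam m = 0 := by
        intro a m
        have h0 : (⟨(m : A) * a - a * (m : A),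
            M.sub_mem (hM a m m.2).2 (hM a m m.2).1⟩ : ↥M) = 0 := by
          ext
          simp [mul_comm]
        have := hf a m
        rw [hD3app, h0, map_zero] at this
        exact this
      intro m
      have := hzero (m : A) x
      rcases mul_eq_zero.1 this with h | h
      · exact h
      · exact absurd h hlamx
  -- conclusion
  refine ⟨0, fun a b => ?_⟩
  have hb : D a b = χ b * D a 1 := hdec b a
  have ha1 : D a 1 = χ a * D 1 1 := by
    have h1 : a = (a - χ a • (1 : A)) + χ a • (1 : A) := by abel
    calc D a 1 = D ((a - χ a • (1 : A)) + χ a • (1 : A)) 1 := by rw [← h1]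
      _ = D (a - χ a • (1 : A)) 1 + χ a • D 1 1 := by
          rw [map_add, map_smul]; rfl
      _ = 0 + χ a * D 1 1 := by
          rw [hφM ⟨a - χ a • (1 : A), hχ a⟩, smul_eq_mul]
      _ = χ a * D 1 1 := by ring
  rw [hb, ha1, hD1 1]
  simp
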